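/- Suppose κ : [0, τ₁] → ℝ is differentiable and satisfies the Riccati inequality -(κ + ε₂)² ≤ κ̇ ≤ -(κ - c₀ε₁)² + ε₂² with ε₂² = 2c₀ε₁, and κ(τ₀) > c₁ for some c₁ > 5√ε₂² at some τ₀ ∈ [0, τ₁). Then for all τ ∈ [τ₀, τ₁], 1/(κ(τ₀)^{-1} + (τ - τ₀)) - ε₃ ≤ κ(τ) ≤ 1/(κ(τ₀)^{-1} + (τ - τ₀)) + ε₃, where ε₃ = 2ε₂ + 2c₀ε₁. -/

import Mathlib

set_option maxHeartbeats 1000000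

/-- Riccati comparison for the wave-front curvature. If `κ` satisfies
`-(κ + ε₂)² ≤ κ̇ ≤ -(κ - c₀ε₁)² + ε₂²` on `[0, τ₁]` with `ε₂² = 2c₀ε₁`, and
`κ(τ₀) > c₁ > 5ε₂` at some `τ₀ ∈ [0, τ₁)`, then for all `τ ∈ [τ₀, τ₁]`,
`1/(κ(τ₀)⁻¹ + (τ-τ₀)) - ε₃ ≤ κ(τ) ≤ 1/(κ(τ₀)⁻¹ + (τ-τ₀)) + ε₃` with `ε₃ = 2ε₂ + 2c₀ε₁`. -/
theorem stmt_7 (c₀ ε₁ ε₂ ε₃ τ₀ τ₁ c₁ : ℝ) (hc₀ : 0 < c₀) (hε₁ : 0 < ε₁)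
    (hε₂ : ε₂ = Real.sqrt (2 * c₀ * ε₁)) (hε₃ : ε₃ = 2 * ε₂ + 2 * c₀ * ε₁)
    (hτ₀ : 0 ≤ τ₀) (hτ₀₁ : τ₀ < τ₁)
    (κ κ' : ℝ → ℝ)
    (hderiv : ∀ τ ∈ Set.Icc (0 : ℝ) τ₁, HasDerivAt κ (κ' τ) τ)
    (hlower : ∀ τ ∈ Set.Icc (0 : ℝ) τ₁, -(κ τ + ε₂) ^ 2 ≤ κ' τ)
    (hupper : ∀ τ ∈ Set.Icc (0 : ℝ) τ₁, κ' τ ≤ -(κ τ - c₀ * ε₁) ^ 2 + ε₂ ^ 2)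
    (hc₁ : 5 * ε₂ < c₁) (hκτ₀ : c₁ < κ τ₀) :
    ∀ τ ∈ Set.Icc τ₀ τ₁,
      1 / ((κ τ₀)⁻¹ + (τ - τ₀)) - ε₃ ≤ κ τ ∧
        κ τ ≤ 1 / ((κ τ₀)⁻¹ + (τ - τ₀)) + ε₃ := by
  have hc₀ε₁ : 0 < 2 * c₀ * ε₁ := by positivity
  have hε₂pos : 0 < ε₂ := hε₂ ▸ Real.sqrt_pos.mpr hc₀ε₁
  have hε₂sq : ε₂ ^ 2 = 2 * c₀ * ε₁ := by
    rw [hε₂, sq, Real.mul_self_sqrt hc₀ε₁.le]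
  have hA : 0 < κ τ₀ := by nlinarith
  set A := κ τ₀ with hAdef
  have hAinv : 0 < A⁻¹ := inv_pos.mpr hA
  have hε₃pos : 0 < ε₃ := by
    have := mul_pos hc₀ hε₁; rw [hε₃]; nlinarith
  have hsub : Set.Icc τ₀ τ₁ ⊆ Set.Icc (0:ℝ) τ₁ := Set.Icc_subset_Icc hτ₀ le_rfl
  have hsub' : Set.Ico τ₀ τ₁ ⊆ Set.Icc (0:ℝ) τ₁ := fun x hx => hsub ⟨hx.1, hx.2.le⟩
  have hκcont : ContinuousOn κ (Set.Icc τ₀ τ₁) := fun x hx =>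
    ((hderiv x (hsub hx)).continuousAt).continuousWithinAt
  have hκderiv : ∀ x ∈ Set.Ico τ₀ τ₁, HasDerivWithinAt κ (κ' x) (Set.Ici x) x := fun x hx =>
    (hderiv x (hsub' hx)).hasDerivWithinAt
  have hden : ∀ x ∈ Set.Icc τ₀ τ₁, 0 < A⁻¹ + (x - τ₀) := by
    intro x hx
    have h1 : τ₀ ≤ x := hx.1
    linarith
  -- Upper bound
  have upper : ∀ x ∈ Set.Icc τ₀ τ₁, κ x ≤ (A⁻¹ + (x - τ₀))⁻¹ + ε₃ := by
    have haffine : ∀ x : ℝ, HasDerivAt (fun y => A⁻¹ + (y - τ₀)) 1 x := by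
      intro x
      simpa using ((hasDerivAt_id x).sub_const τ₀).const_add A⁻¹
    apply image_le_of_deriv_right_lt_deriv_boundary' hκcont hκderiv
      (B' := fun x => -((A⁻¹ + (x - τ₀))⁻¹) ^ 2)
    · have : (A⁻¹ + (τ₀ - τ₀))⁻¹ = A := by simp
      rw [this]; linarith
    · apply ContinuousOn.add _ continuousOn_const
      exact ((continuous_const.add (continuous_id.sub continuous_const)).continuousOn).inv₀
        (fun x hx => (hden x hx).ne')
    · intro x hx
      have hd := hden x ⟨hx.1, hx.2.le⟩
      have h := ((haffine x).inv hd.ne').add_const ε₃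
      exact h.hasDerivWithinAt.congr_deriv (by rw [inv_pow]; ring)
    · intro x hx heq
      have hx' := hsub' hx
      have h1 := hupper x hx'
      have hd : 0 < (A⁻¹ + (x - τ₀))⁻¹ := inv_pos.mpr (hden x ⟨hx.1, hx.2.le⟩)
      set d := (A⁻¹ + (x - τ₀))⁻¹ with hddef
      have hκx : κ x = d + ε₃ := heq
      have hce : 0 < c₀ * ε₁ := mul_pos hc₀ hε₁
      nlinarith [mul_pos hd hε₂pos, mul_pos hd hce, mul_pos hε₂pos hce, sq_nonneg (c₀ * ε₁)]
  -- Lower bound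
  have hAε₂ : 0 < A + ε₂ := by linarith
  have hB₀ : 0 < (A + ε₂)⁻¹ := inv_pos.mpr hAε₂
  set B₀ := (A + ε₂)⁻¹ with hB₀def
  have hB₀lt : B₀ < A⁻¹ := by
    rw [hB₀def]
    exact inv_strictAnti₀ hA (by linarith)
  set δ := (A⁻¹ - B₀) / (τ₁ - τ₀) with hδdef
  have hδpos : 0 < δ := div_pos (by linarith) (by linarith)
  have hdenδ : ∀ x ∈ Set.Icc τ₀ τ₁, 0 < B₀ + (1 + δ) * (x - τ₀) := by
    intro x hx
    have h1 : τ₀ ≤ x := hx.1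
    nlinarith
  have lower₀ : ∀ x ∈ Set.Icc τ₀ τ₁, -κ x - ε₂ ≤ -(B₀ + (1 + δ) * (x - τ₀))⁻¹ := by
    have haffine : ∀ x : ℝ, HasDerivAt (fun y => B₀ + (1 + δ) * (y - τ₀)) (1 + δ) x := by
      intro x
      simpa using (((hasDerivAt_id x).sub_const τ₀).const_mul (1 + δ)).const_add B₀
    refine fun x hx => image_le_of_deriv_right_lt_deriv_boundary'
      (f := fun y => -κ y - ε₂)
      (f' := fun x => -κ' x)
      (B := fun y => -(B₀ + (1 + δ) * (y - τ₀))⁻¹)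
      (B' := fun x => (1 + δ) * ((B₀ + (1 + δ) * (x - τ₀))⁻¹) ^ 2)
      ((hκcont.neg).sub continuousOn_const) ?_ ?_ ?_ ?_ ?_ hx
    · intro x hx
      exact (((hderiv x (hsub' hx)).neg).sub_const ε₂).hasDerivWithinAt
    · show -κ τ₀ - ε₂ ≤ -(B₀ + (1 + δ) * (τ₀ - τ₀))⁻¹
      have : (B₀ + (1 + δ) * (τ₀ - τ₀))⁻¹ = A + ε₂ := by simp [hB₀def]
      rw [this]; linarith
    · apply ContinuousOn.neg
      exact ((continuous_const.add (continuous_const.mul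
        (continuous_id.sub continuous_const))).continuousOn).inv₀
        (fun x hx => (hdenδ x hx).ne')
    · intro x hx
      have hd := hdenδ x ⟨hx.1, hx.2.le⟩
      have h := ((haffine x).inv hd.ne').neg
      exact h.hasDerivWithinAt.congr_deriv (by rw [inv_pow]; ring)
    · intro x hx heq
      have hx' := hsub' hx
      have h1 := hlower x hx'
      have hd : 0 < (B₀ + (1 + δ) * (x - τ₀))⁻¹ := inv_pos.mpr (hdenδ x ⟨hx.1, hx.2.le⟩)
      set r := (B₀ + (1 + δ) * (x - τ₀))⁻¹ with hrdef
      have heq' : -κ x - ε₂ = -r := heq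
      have hκx : κ x + ε₂ = r := by linarith
      have : -κ' x ≤ (κ x + ε₂) ^ 2 := by linarith
      rw [hκx] at this
      nlinarith [mul_pos (mul_pos hδpos hd) hd]
    
  -- combine
  intro τ hτ
  have hs0 : 0 ≤ τ - τ₀ := by linarith [hτ.1]
  have hs1 : τ - τ₀ ≤ τ₁ - τ₀ := by linarith [hτ.2]
  have hd1 := hden τ hτ
  have hd2 := hdenδ τ hτ
  have hmono : (A⁻¹ + (τ - τ₀))⁻¹ ≤ (B₀ + (1 + δ) * (τ - τ₀))⁻¹ := by
    apply inv_anti₀ hd2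
    have : δ * (τ - τ₀) ≤ A⁻¹ - B₀ := by
      rw [hδdef]
      rw [div_mul_eq_mul_div, div_le_iff₀ (by linarith : (0:ℝ) < τ₁ - τ₀)]
      nlinarith
    nlinarith
  have hlow := lower₀ τ hτ
  have hup := upper τ hτ
  have hε₂ε₃ : ε₂ ≤ ε₃ := by nlinarith [mul_pos hc₀ hε₁]
  constructor
  · rw [one_div]; linarith
  · rw [one_div]; linarith
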